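/- Let g : ℝ → ℝ≥0 be a log-concave function such that E_{x∼N(0,1)}[x·g(x)] = 0. Then E_{x∼N(0,1)}[x²·g(x)] ≤ E_{x∼N(0,1)}[g(x)]. -/

import Mathlib

open MeasureTheory ProbabilityTheory Real
open scoped ENNReal NNReal

/-- The standard Gaussian measure `N(0,1)^n` on `Fin n → ℝ`. -/
noncomputable def stdGaussian (n : ℕ) : Measure (Fin n → ℝ) :=
  Measure.pi fun _ => gaussianReal 0 1

/-- The 0/1 indicator function of a set. -/
noncomputable def ind {n : ℕ} (K : Set (Fin n → ℝ)) (x : Fin n → ℝ) : ℝ :=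
  Set.indicator K (fun _ => (1:ℝ)) x

/-- The convex influence of direction `v` on `K`:
`Inf_v[K] = E_{x ∼ N(0,1)^n}[K(x) · (1 - (v·x)²)/√2]`. -/
noncomputable def convInf {n : ℕ} (K : Set (Fin n → ℝ)) (v : Fin n → ℝ) : ℝ :=
  ∫ x, ind K x * ((1 - (∑ i, v i * x i)^2) / Real.sqrt 2) ∂(stdGaussian n)

/-- Total convex influence, defined as the sum of coordinate influences. -/
noncomputable def convTInf {n : ℕ} (K : Set (Fin n → ℝ)) : ℝ :=
  ∑ i : Fin n, convInf K (fun j => if j = i then 1 else 0)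

/-- Total convex influence in integral form:
`TInf[K] = E_{x ∼ N(0,1)^n}[K(x) · (n - ‖x‖²)/√2]`. -/
noncomputable def convTInfI {n : ℕ} (K : Set (Fin n → ℝ)) : ℝ :=
  ∫ x, ind K x * (((n : ℝ) - ∑ i, (x i)^2) / Real.sqrt 2) ∂(stdGaussian n)

/-- Gaussian volume `γ(K)` under `N(0,1)^n`. -/
noncomputable def gvol {n : ℕ} (K : Set (Fin n → ℝ)) : ℝ :=
  (stdGaussian n K).toReal

/-- Variance of the indicator of `K` under the standard Gaussian: `γ(K)(1-γ(K))`. -/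
noncomputable def gvar {n : ℕ} (K : Set (Fin n → ℝ)) : ℝ :=
  gvol K * (1 - gvol K)

section Aux

lemma L1 : ∫ x : ℝ, x * rexp (-(2⁻¹) * x^2) = 0 := by
  have hd : ∀ x : ℝ, HasDerivAt (fun x : ℝ => -rexp (-(2⁻¹) * x^2))
      (x * rexp (-(2⁻¹) * x^2)) x := by
    intro x
    have := (((hasDerivAt_pow 2 x).const_mul (-(2⁻¹ : ℝ))).exp).neg
    refine this.congr_deriv ?_
    ring
  exact integral_eq_zero_of_hasDerivAt_of_integrable hd
    (integrable_mul_exp_neg_mul_sq (by norm_num : (0:ℝ) < 2⁻¹))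
    (integrable_exp_neg_mul_sq (by norm_num : (0:ℝ) < 2⁻¹)).neg

lemma int2exp : Integrable fun x : ℝ => x^2 * rexp (-(2⁻¹) * x^2) := by
  have := integrable_rpow_mul_exp_neg_mul_sq (by norm_num : (0:ℝ) < 2⁻¹)
    (by norm_num : (-1:ℝ) < 2)
  convert this using 2 with x
  rw [show ((2:ℝ) = ((2:ℕ):ℝ)) by norm_num, Real.rpow_natCast]

lemma L2 : ∫ x : ℝ, x^2 * rexp (-(2⁻¹) * x^2) = Real.sqrt (2*π) := by
  have hd : ∀ x : ℝ, HasDerivAt (fun x : ℝ => x * rexp (-(2⁻¹) * x^2))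
      (rexp (-(2⁻¹) * x^2) - x^2 * rexp (-(2⁻¹) * x^2)) x := by
    intro x
    have := (hasDerivAt_id x).mul (((hasDerivAt_pow 2 x).const_mul (-(2⁻¹ : ℝ))).exp)
    refine this.congr_deriv ?_
    simp only [id_eq]
    ring
  have h0 := integral_eq_zero_of_hasDerivAt_of_integrable hd
    (((integrable_exp_neg_mul_sq (by norm_num : (0:ℝ) < 2⁻¹))).sub int2exp)
    (integrable_mul_exp_neg_mul_sq (by norm_num : (0:ℝ) < 2⁻¹))
  rw [integral_sub (integrable_exp_neg_mul_sq (by norm_num : (0:ℝ) < 2⁻¹)) int2exp,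
    sub_eq_zero] at h0
  rw [← h0, integral_gaussian]
  rw [show (π / 2⁻¹ : ℝ) = 2 * π by ring]

lemma gpdf_eq (x : ℝ) : gaussianPDFReal 0 1 x = (√(2*π))⁻¹ * rexp (-(2⁻¹) * x^2) := by
  rw [gaussianPDFReal]
  rw [NNReal.coe_one, mul_one, sub_zero]
  congr 1
  ring

lemma gwd : gaussianReal 0 1 =
    volume.withDensity fun x => ((gaussianPDFReal 0 1 x).toNNReal : ℝ≥0∞) := by
  rw [gaussianReal_of_var_ne_zero 0 one_ne_zero]
  rfl

lemma gmeas : Measurable fun x => (gaussianPDFReal 0 1 x).toNNReal :=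
  (measurable_gaussianPDFReal 0 1).real_toNNReal

lemma gint (h : ℝ → ℝ) : ∫ x, h x ∂(gaussianReal 0 1) =
    ∫ x, gaussianPDFReal 0 1 x * h x := by
  rw [gwd, integral_withDensity_eq_integral_smul gmeas]
  congr 1 with x
  simp [NNReal.smul_def, Real.coe_toNNReal _ (gaussianPDFReal_nonneg 0 1 x)]

lemma gintegrable (h : ℝ → ℝ) : Integrable h (gaussianReal 0 1) ↔
    Integrable (fun x => gaussianPDFReal 0 1 x * h x) volume := by
  rw [gwd, integrable_withDensity_iff_integrable_smul gmeas]
  constructor <;> intro hI <;> refine hI.congr (Filter.Eventually.of_forall fun x => ?_) <;>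
    simp [NNReal.smul_def, Real.coe_toNNReal _ (gaussianPDFReal_nonneg 0 1 x)]

lemma sqrt2pi_pos : (0:ℝ) < √(2*π) := Real.sqrt_pos.2 (by positivity)

lemma gmoment1 : ∫ x, x ∂(gaussianReal 0 1) = 0 := by
  rw [gint]
  have : (fun x => gaussianPDFReal 0 1 x * x) =
      fun x => (√(2*π))⁻¹ * (x * rexp (-(2⁻¹) * x^2)) := by
    funext x; rw [gpdf_eq]; ring
  rw [this, integral_const_mul, L1, mul_zero]

lemma gmoment2 : ∫ x, x^2 ∂(gaussianReal 0 1) = 1 := by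
  rw [gint]
  have : (fun x => gaussianPDFReal 0 1 x * x^2) =
      fun x => (√(2*π))⁻¹ * (x^2 * rexp (-(2⁻¹) * x^2)) := by
    funext x; rw [gpdf_eq]; ring
  rw [this, integral_const_mul, L2, inv_mul_cancel₀ sqrt2pi_pos.ne']

lemma gint1 : Integrable (fun x => x) (gaussianReal 0 1) := by
  rw [gintegrable]
  have : (fun x => gaussianPDFReal 0 1 x * x) =
      fun x => (√(2*π))⁻¹ * (x * rexp (-(2⁻¹) * x^2)) := by
    funext x; rw [gpdf_eq]; ring
  rw [this]
  exact (integrable_mul_exp_neg_mul_sq (by norm_num : (0:ℝ) < 2⁻¹)).const_mul _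

lemma gint2 : Integrable (fun x => x^2) (gaussianReal 0 1) := by
  rw [gintegrable]
  have : (fun x => gaussianPDFReal 0 1 x * x^2) =
      fun x => (√(2*π))⁻¹ * (x^2 * rexp (-(2⁻¹) * x^2)) := by
    funext x; rw [gpdf_eq]; ring
  rw [this]
  exact int2exp.const_mul _

end Aux

/-- For a log-concave `g : ℝ → ℝ≥0` with `E_{x∼N(0,1)}[x·g(x)] = 0`,
we have `E[x²·g(x)] ≤ E[g(x)]`. -/
theorem stmt0 (g : ℝ → ℝ) (hg0 : ∀ x, 0 ≤ g x)
    (hlc : ∀ x y θ : ℝ, 0 ≤ θ → θ ≤ 1 →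
      (g x) ^ θ * (g y) ^ (1 - θ) ≤ g (θ * x + (1 - θ) * y))
    (hint : Integrable g (gaussianReal 0 1))
    (hint1 : Integrable (fun x => x * g x) (gaussianReal 0 1))
    (hint2 : Integrable (fun x => x ^ 2 * g x) (gaussianReal 0 1))
    (hmean : ∫ x, x * g x ∂(gaussianReal 0 1) = 0) :
    ∫ x, x ^ 2 * g x ∂(gaussianReal 0 1) ≤ ∫ x, g x ∂(gaussianReal 0 1) := by
  set c₀ := ∫ x, g x ∂(gaussianReal 0 1) with hc₀def
  have hc₀ : 0 ≤ c₀ := integral_nonneg hg0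
  -- integrability of building blocks
  have hgsub : Integrable (fun x => g x - c₀) (gaussianReal 0 1) :=
    hint.sub (integrable_const _)
  have hxgsub : Integrable (fun x => x * (g x - c₀)) (gaussianReal 0 1) := by
    have he : (fun x : ℝ => x * (g x - c₀)) = fun x => x * g x - c₀ * x := by
      funext x; ring
    rw [he]; exact hint1.sub (gint1.const_mul c₀)
  have hx2gsub : Integrable (fun x => x ^ 2 * (g x - c₀)) (gaussianReal 0 1) := by
    have he : (fun x : ℝ => x ^ 2 * (g x - c₀)) = fun x => x ^ 2 * g x - c₀ * x ^ 2 := by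
      funext x; ring
    rw [he]; exact hint2.sub (gint2.const_mul c₀)
  -- basic integrals
  have E0 : ∫ x, (g x - c₀) ∂(gaussianReal 0 1) = 0 := by
    rw [integral_sub hint (integrable_const _), integral_const]
    simp [measure_univ, ← hc₀def]
  have E1 : ∫ x, x * (g x - c₀) ∂(gaussianReal 0 1) = 0 := by
    have he : (fun x : ℝ => x * (g x - c₀)) = fun x => x * g x - c₀ * x := by
      funext x; ring
    rw [he, integral_sub hint1 (gint1.const_mul c₀), hmean, integral_const_mul, gmoment1]
    ring
  have E2 : ∫ x, x ^ 2 * (g x - c₀) ∂(gaussianReal 0 1)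
      = (∫ x, x ^ 2 * g x ∂(gaussianReal 0 1)) - c₀ := by
    have he : (fun x : ℝ => x ^ 2 * (g x - c₀)) = fun x => x ^ 2 * g x - c₀ * x ^ 2 := by
      funext x; ring
    rw [he, integral_sub hint2 (gint2.const_mul c₀), integral_const_mul, gmoment2, mul_one]
  have quad : ∀ α β γ : ℝ, ∫ x, (α * x ^ 2 + β * x + γ) * (g x - c₀) ∂(gaussianReal 0 1)
      = α * ((∫ x, x ^ 2 * g x ∂(gaussianReal 0 1)) - c₀) := by
    intro α β γ
    have he : (fun x : ℝ => (α * x ^ 2 + β * x + γ) * (g x - c₀)) =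
        fun x => α * (x ^ 2 * (g x - c₀)) + (β * (x * (g x - c₀)) + γ * (g x - c₀)) := by
      funext x; ring
    have hI3 : Integrable (fun x : ℝ => β * (x * (g x - c₀)) + γ * (g x - c₀))
        (gaussianReal 0 1) := (hxgsub.const_mul β).add (hgsub.const_mul γ)
    rw [he, integral_add (hx2gsub.const_mul α) hI3,
      integral_add (hxgsub.const_mul β) (hgsub.const_mul γ),
      integral_const_mul, integral_const_mul, integral_const_mul, E0, E1, E2]
    ring
  -- if g is a.e. constant c₀ we are done
  have const_case : g =ᵐ[gaussianReal 0 1] (fun _ => c₀) →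
      ∫ x, x ^ 2 * g x ∂(gaussianReal 0 1) ≤ c₀ := by
    intro hae
    have h1 : (fun x => x ^ 2 * g x) =ᵐ[gaussianReal 0 1] fun x => x ^ 2 * c₀ :=
      hae.mono fun x hx => by simp only [hx]
    rw [integral_congr_ae h1, integral_mul_const, gmoment2, one_mul]
  -- points are null
  have aene : ∀ t : ℝ, ∀ᵐ x ∂(gaussianReal 0 1), x ≠ t := by
    intro t
    have h0 : (gaussianReal 0 1) {t} = 0 :=
      gaussianReal_absolutelyContinuous 0 one_ne_zero (Real.volume_singleton)
    rw [ae_iff]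
    convert h0 using 2
    ext x
    simp
  -- a nonneg linear-factor identity forces g a.e. constant
  have lin_case : ∀ β γ : ℝ, β ≠ 0 → (∀ x, 0 ≤ (β * x + γ) * (g x - c₀)) →
      g =ᵐ[gaussianReal 0 1] fun _ => c₀ := by
    intro β γ hβ h
    have hI : Integrable (fun x => (β * x + γ) * (g x - c₀)) (gaussianReal 0 1) := by
      have he : (fun x : ℝ => (β * x + γ) * (g x - c₀)) =
          fun x => β * (x * (g x - c₀)) + γ * (g x - c₀) := by funext x; ring
      rw [he]; exact (hxgsub.const_mul β).add (hgsub.const_mul γ)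
    have hz : ∫ x, (β * x + γ) * (g x - c₀) ∂(gaussianReal 0 1) = 0 := by
      have he : (fun x : ℝ => (β * x + γ) * (g x - c₀)) =
          fun x => (0 * x ^ 2 + β * x + γ) * (g x - c₀) := by funext x; ring
      rw [he, quad]; ring
    have hae := (integral_eq_zero_iff_of_nonneg h hI).1 hz
    filter_upwards [hae, aene (-γ / β)] with x hx hxne
    have hx' : (β * x + γ) * (g x - c₀) = 0 := hx
    rcases mul_eq_zero.1 hx' with h1 | h2
    · exact absurd (by rw [eq_div_iff hβ]; linear_combination h1) hxne
    · exact sub_eq_zero.1 h2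
  -- interval property of the superlevel set, given c₀ > 0
  rcases hc₀.eq_or_lt with hzero | hc₀pos
  · -- c₀ = 0 : g = 0 a.e.
    have hae := (integral_eq_zero_iff_of_nonneg hg0 hint).1 (by rw [← hc₀def, ← hzero])
    exact const_case (hae.mono fun x hx => by simpa [← hzero] using hx)
  have hS : ∀ a b x : ℝ, c₀ ≤ g a → c₀ ≤ g b → a ≤ x → x ≤ b → c₀ ≤ g x := by
    intro a b x ha hb hax hxb
    rcases eq_or_lt_of_le (le_trans hax hxb) with hab | hab
    · have : x = a := le_antisymm (hab ▸ hxb) hax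
      rwa [this]
    · set θ := (b - x) / (b - a) with hθdef
      have hba : 0 < b - a := by linarith
      have hθ0 : 0 ≤ θ := div_nonneg (by linarith) hba.le
      have hθ1 : θ ≤ 1 := by rw [div_le_one hba]; linarith
      have hx : θ * a + (1 - θ) * b = x := by
        rw [hθdef]; field_simp; ring
      have h1 : c₀ ^ θ * c₀ ^ (1 - θ) ≤ g a ^ θ * g b ^ (1 - θ) :=
        mul_le_mul (Real.rpow_le_rpow hc₀ ha hθ0) (Real.rpow_le_rpow hc₀ hb (by linarith))
          (Real.rpow_nonneg hc₀ _) (Real.rpow_nonneg (hg0 a) _)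
      have h2 : c₀ ^ θ * c₀ ^ (1 - θ) = c₀ := by
        rw [← Real.rpow_add hc₀pos]; norm_num
      calc c₀ = c₀ ^ θ * c₀ ^ (1 - θ) := h2.symm
        _ ≤ g a ^ θ * g b ^ (1 - θ) := h1
        _ ≤ g (θ * a + (1 - θ) * b) := hlc a b θ hθ0 hθ1
        _ = g x := by rw [hx]
  by_cases hne : ∃ s, c₀ ≤ g s
  · obtain ⟨s, hs⟩ := hne
    have hSne : {x : ℝ | c₀ ≤ g x}.Nonempty := ⟨s, hs⟩
    by_cases hba : BddAbove {x : ℝ | c₀ ≤ g x} <;>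
      by_cases hbb : BddBelow {x : ℝ | c₀ ≤ g x}
    · -- bounded both sides : main case
      set p := sInf {x : ℝ | c₀ ≤ g x} with hpdef
      set q := sSup {x : ℝ | c₀ ≤ g x} with hqdef
      have hpq : p ≤ q := le_trans (csInf_le hbb hs) (le_csSup hba hs)
      have pointwise : ∀ x, (1 * x ^ 2 + (-(p + q)) * x + p * q) * (g x - c₀) ≤ 0 := by
        intro x
        have hψ : (1 * x ^ 2 + (-(p + q)) * x + p * q) = (x - p) * (x - q) := by ring
        rw [hψ]
        by_cases hx : c₀ ≤ g x
        · have hp : p ≤ x := csInf_le hbb hx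
          have hq : x ≤ q := le_csSup hba hx
          nlinarith [mul_nonneg (mul_nonneg (sub_nonneg.2 hp) (sub_nonneg.2 hq))
            (sub_nonneg.2 hx)]
        · push_neg at hx
          have hside : x ≤ p ∨ q ≤ x := by
            by_contra hcon
            push_neg at hcon
            obtain ⟨a, haS, hax⟩ := exists_lt_of_csInf_lt hSne hcon.1
            obtain ⟨b, hbS, hxb⟩ := exists_lt_of_lt_csSup hSne hcon.2
            exact absurd (hS a b x haS hbS hax.le hxb.le) (not_le.2 hx)
          have h1 : 0 ≤ (x - p) * (x - q) := by
            rcases hside with h | h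
            · nlinarith
            · nlinarith
          nlinarith [mul_nonneg h1 (by linarith : (0:ℝ) ≤ c₀ - g x)]
      have key := integral_nonpos (μ := gaussianReal 0 1) pointwise
      rw [quad 1 (-(p + q)) (p * q)] at key
      linarith
    · -- bounded above, unbounded below
      set q := sSup {x : ℝ | c₀ ≤ g x} with hqdef
      refine const_case (lin_case (-1) q (by norm_num) fun x => ?_)
      by_cases hx : c₀ ≤ g x
      · have hq : x ≤ q := le_csSup hba hx
        have : (0:ℝ) ≤ (q - x) * (g x - c₀) := mul_nonneg (by linarith) (by linarith)
        nlinarith [this]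
      · push_neg at hx
        have hqx : q ≤ x := by
          by_contra hcon
          push_neg at hcon
          obtain ⟨b, hbS, hxb⟩ := exists_lt_of_lt_csSup hSne hcon
          obtain ⟨a, haS, hax⟩ := (not_bddBelow_iff.1 hbb) x
          exact absurd (hS a b x haS hbS hax.le hxb.le) (not_le.2 hx)
        nlinarith [mul_nonneg (by linarith : (0:ℝ) ≤ x - q) (by linarith : (0:ℝ) ≤ c₀ - g x)]
    · -- bounded below, unbounded above
      set p := sInf {x : ℝ | c₀ ≤ g x} with hpdef
      refine const_case (lin_case 1 (-p) one_ne_zero fun x => ?_)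
      by_cases hx : c₀ ≤ g x
      · have hp : p ≤ x := csInf_le hbb hx
        nlinarith [mul_nonneg (by linarith : (0:ℝ) ≤ x - p) (by linarith : (0:ℝ) ≤ g x - c₀)]
      · push_neg at hx
        have hpx : x ≤ p := by
          by_contra hcon
          push_neg at hcon
          obtain ⟨a, haS, hax⟩ := exists_lt_of_csInf_lt hSne hcon
          obtain ⟨b, hbS, hxb⟩ := (not_bddAbove_iff.1 hba) x
          exact absurd (hS a b x haS hbS hax.le hxb.le) (not_le.2 hx)
        nlinarith [mul_nonneg (by linarith : (0:ℝ) ≤ p - x) (by linarith : (0:ℝ) ≤ c₀ - g x)]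
    · -- unbounded both sides : g ≥ c₀ everywhere
      have hge : ∀ x, c₀ ≤ g x := by
        intro x
        obtain ⟨a, haS, hax⟩ := (not_bddBelow_iff.1 hbb) x
        obtain ⟨b, hbS, hxb⟩ := (not_bddAbove_iff.1 hba) x
        exact hS a b x haS hbS hax.le hxb.le
      have hae := (integral_eq_zero_iff_of_nonneg (fun x => by
        simpa using sub_nonneg.2 (hge x)) hgsub).1 E0
      exact const_case (hae.mono fun x hx => by
        have : g x - c₀ = 0 := hx
        linarith)
  · -- empty superlevel set : contradiction
    push_neg at hne
    exfalso
    have hIn : Integrable (fun x => c₀ - g x) (gaussianReal 0 1) := by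
      have he : (fun x : ℝ => c₀ - g x) = fun x => -(g x - c₀) := by funext x; ring
      rw [he]; exact hgsub.neg
    have hz : ∫ x, (c₀ - g x) ∂(gaussianReal 0 1) = 0 := by
      have he : (fun x : ℝ => c₀ - g x) = fun x => -(g x - c₀) := by funext x; ring
      rw [he, integral_neg, E0, neg_zero]
    have hae := (integral_eq_zero_iff_of_nonneg
      (fun x => by simpa using (hne x).le) hIn).1 hz
    obtain ⟨x, hx⟩ := hae.exists
    have : c₀ - g x = 0 := hx
    linarith [hne x]
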